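/- For an odd integer q ≥ 3 and a real number s, define Z(q, s) = 1 + q^{−s} + ((q−3)/2)·(q+1)^{−s} + 2·((q+1)/2)^{−s} + ((q−1)/2)·(q−1)^{−s} + 2·((q−1)/2)^{−s} + [ 4q·((q²−1)/2)^{−s} + ((q²−1)/2)·(q²−q)^{−s} + ((q−1)²/2)·(q²+q)^{−s} ] / (1 − q^{1−s}). Then for every odd integer q ≥ 3 and every real s with 2 ≤ s ≤ 3, (1 − q^{1−s})^{−1/2} < Z(q, s) < (1 − q^{1−s})^{−100}. -/

import Mathlib

private lemma rpow_div_neg {a c s : ℝ} (ha : 0 ≤ a) (hc : 0 < c) :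
    (a / c) ^ (-s) = c ^ s * a ^ (-s) := by
  rw [div_eq_mul_inv, Real.mul_rpow ha (inv_nonneg.mpr hc.le), Real.inv_rpow hc.le,
    ← Real.rpow_neg hc.le, neg_neg, mul_comm]

/-- The representation zeta function of `SL₂(O)` for `O` the ring of integers of a
non-archimedean local field with residue field of odd cardinality `q`
(Jaikin-Zapirain's formula). -/
noncomputable def jaikinZeta (q : ℕ) (s : ℝ) : ℝ :=
  1 + (q : ℝ) ^ (-s) + ((q : ℝ) - 3) / 2 * ((q : ℝ) + 1) ^ (-s) +
    2 * (((q : ℝ) + 1) / 2) ^ (-s) +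
    ((q : ℝ) - 1) / 2 * ((q : ℝ) - 1) ^ (-s) +
    2 * (((q : ℝ) - 1) / 2) ^ (-s) +
    (4 * (q : ℝ) * (((q : ℝ) ^ 2 - 1) / 2) ^ (-s) +
        ((q : ℝ) ^ 2 - 1) / 2 * ((q : ℝ) ^ 2 - (q : ℝ)) ^ (-s) +
        ((q : ℝ) - 1) ^ 2 / 2 * ((q : ℝ) ^ 2 + (q : ℝ)) ^ (-s)) /
      (1 - (q : ℝ) ^ (1 - s))

set_option maxHeartbeats 1000000 in
/-- For every odd `q ≥ 3` and every real `2 ≤ s ≤ 3`,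
`(1 − q^{1−s})^{−1/2} < Z(q, s) < (1 − q^{1−s})^{−100}`. -/
theorem stmt_18 (q : ℕ) (hq : Odd q) (hq3 : 3 ≤ q) (s : ℝ) (hs2 : 2 ≤ s) (hs3 : s ≤ 3) :
    (1 - (q : ℝ) ^ (1 - s)) ^ (-(1 / 2) : ℝ) < jaikinZeta q s ∧
      jaikinZeta q s < (1 - (q : ℝ) ^ (1 - s)) ^ (-(100 : ℝ)) := by
  have hQ3 : (3:ℝ) ≤ (q:ℝ) := by exact_mod_cast hq3
  simp only [jaikinZeta]
  set Q : ℝ := (q:ℝ) with hQdef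
  have hQ0 : (0:ℝ) < Q := by linarith
  have hQ1 : (1:ℝ) ≤ Q := by linarith
  set x : ℝ := Q ^ (1 - s) with hxdef
  set u : ℝ := Q ^ (-s) with hudef
  have hu0 : 0 < u := Real.rpow_pos_of_pos hQ0 _
  have hx0 : 0 < x := Real.rpow_pos_of_pos hQ0 _
  have hxu : x = Q * u := by
    rw [hxdef, hudef, show (1-s) = 1 + -s by ring, Real.rpow_add hQ0, Real.rpow_one]
  have hx3 : x ≤ 1/3 := by
    have h1 : x ≤ Q ^ (-1 : ℝ) := Real.rpow_le_rpow_of_exponent_le hQ1 (by linarith)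
    rw [Real.rpow_neg_one] at h1
    have h2 : Q⁻¹ ≤ 1/3 := by
      rw [inv_le_comm₀ (by linarith) (by norm_num)]; linarith
    linarith
  have hux : 3 * u ≤ x := by
    rw [hxu]
    linarith [mul_nonneg (show (0:ℝ) ≤ Q - 3 by linarith) hu0.le]
  have hu9 : u ≤ 1/9 := by
    have h1 : u ≤ Q ^ (-1 + -1 : ℝ) := Real.rpow_le_rpow_of_exponent_le hQ1 (by linarith)
    rw [Real.rpow_add hQ0, Real.rpow_neg_one] at h1
    have h2 : Q⁻¹ ≤ 1/3 := by rw [inv_le_comm₀ (by linarith) (by norm_num)]; linarith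
    have h3 : Q⁻¹*Q⁻¹ ≤ (1/3)*(1/3) :=
      mul_le_mul h2 h2 (inv_pos.mpr hQ0).le (by norm_num)
    linarith only [h1, h3]
  have h2s : (2:ℝ) ^ s ≤ 8 := by
    have h := Real.rpow_le_rpow_of_exponent_le (by norm_num : (1:ℝ) ≤ 2) hs3
    rw [show (3:ℝ) = ((3:ℕ):ℝ) by norm_num, Real.rpow_natCast] at h
    norm_num at h; linarith
  have h3s : (3:ℝ) ^ s ≤ 27 := by
    have h := Real.rpow_le_rpow_of_exponent_le (by norm_num : (1:ℝ) ≤ 3) hs3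
    rw [show (3:ℝ) = ((3:ℕ):ℝ) by norm_num, Real.rpow_natCast] at h
    norm_num at h; linarith
  have hQsq : (Q^2)^(-s) = u * u := by
    rw [hudef, sq, Real.mul_rpow hQ0.le hQ0.le]
  have huu0 : 0 < u * u := mul_pos hu0 hu0
  -- base-monotonicity bounds
  have hb2 : (Q+1)^(-s) ≤ u :=
    Real.rpow_le_rpow_of_nonpos hQ0 (by linarith) (by linarith)
  have hb3 : ((Q+1)/2)^(-s) ≤ 8 * u := by
    have h1 : ((Q+1)/2)^(-s) ≤ (Q/2)^(-s) :=
      Real.rpow_le_rpow_of_nonpos (by linarith) (by linarith) (by linarith)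
    rw [rpow_div_neg hQ0.le (by norm_num : (0:ℝ) < 2), ← hudef] at h1
    linarith [mul_le_mul_of_nonneg_right h2s hu0.le]
  have hb4 : (Q-1)^(-s) ≤ 8 * u := by
    have h1 : (Q-1)^(-s) ≤ (Q/2)^(-s) :=
      Real.rpow_le_rpow_of_nonpos (by linarith) (by linarith) (by linarith)
    rw [rpow_div_neg hQ0.le (by norm_num : (0:ℝ) < 2), ← hudef] at h1
    linarith [mul_le_mul_of_nonneg_right h2s hu0.le]
  have hb5 : ((Q-1)/2)^(-s) ≤ 27 * u := by
    have h1 : ((Q-1)/2)^(-s) ≤ (Q/3)^(-s) :=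
      Real.rpow_le_rpow_of_nonpos (by linarith) (by linarith) (by linarith)
    rw [rpow_div_neg hQ0.le (by norm_num : (0:ℝ) < 3), ← hudef] at h1
    linarith [mul_le_mul_of_nonneg_right h3s hu0.le]
  have hQsq0 : (0:ℝ) < Q^2 := by positivity
  have hQmul : Q*3 ≤ Q*Q := mul_le_mul_of_nonneg_left hQ3 hQ0.le
  have hQsq3 : (3:ℝ) ≤ Q^2 := by linarith only [hQmul, hQ3]
  have hQsqQ : Q + 2 ≤ Q^2 := by linarith only [hQmul, hQ1]
  have hb6 : ((Q^2-1)/2)^(-s) ≤ 27 * (u*u) := by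
    have h1 : ((Q^2-1)/2)^(-s) ≤ (Q^2/3)^(-s) :=
      Real.rpow_le_rpow_of_nonpos (by linarith) (by linarith) (by linarith)
    rw [rpow_div_neg hQsq0.le (by norm_num : (0:ℝ) < 3), hQsq] at h1
    linarith [mul_le_mul_of_nonneg_right h3s huu0.le]
  have hb7 : (Q^2-Q)^(-s) ≤ 8 * (u*u) := by
    have h1 : (Q^2-Q)^(-s) ≤ (Q^2/2)^(-s) :=
      Real.rpow_le_rpow_of_nonpos (by linarith) (by linarith only [hQmul, hQ1]) (by linarith)
    rw [rpow_div_neg hQsq0.le (by norm_num : (0:ℝ) < 2), hQsq] at h1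
    linarith [mul_le_mul_of_nonneg_right h2s huu0.le]
  have hb8 : (Q^2+Q)^(-s) ≤ u*u := by
    have h1 : (Q^2+Q)^(-s) ≤ (Q^2)^(-s) :=
      Real.rpow_le_rpow_of_nonpos (by linarith) (by linarith) (by linarith)
    rwa [hQsq] at h1
  -- positivity of each rpow
  have hp2 : 0 < (Q+1)^(-s) := Real.rpow_pos_of_pos (by linarith) _
  have hp3 : 0 < ((Q+1)/2)^(-s) := Real.rpow_pos_of_pos (by linarith) _
  have hp4 : 0 < (Q-1)^(-s) := Real.rpow_pos_of_pos (by linarith) _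
  have hp5 : 0 < ((Q-1)/2)^(-s) := Real.rpow_pos_of_pos (by linarith) _
  have hp6 : 0 < ((Q^2-1)/2)^(-s) := Real.rpow_pos_of_pos (by linarith) _
  have hp7 : 0 < (Q^2-Q)^(-s) := Real.rpow_pos_of_pos (by linarith) _
  have hp8 : 0 < (Q^2+Q)^(-s) := Real.rpow_pos_of_pos (by linarith) _
  have hden : (2:ℝ)/3 ≤ 1 - x := by linarith
  have hden0 : (0:ℝ) < 1 - x := by linarith
  have hN0 : 0 ≤ 4*Q*((Q^2-1)/2)^(-s) + (Q^2-1)/2*(Q^2-Q)^(-s) + (Q-1)^2/2*(Q^2+Q)^(-s) :=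
    add_nonneg (add_nonneg (mul_nonneg (by linarith) hp6.le)
      (mul_nonneg (by linarith) hp7.le)) (mul_nonneg (by positivity) hp8.le)
  -- lower bound pieces
  have hux2 : x * x ≤ u := by
    have h1 : Q^((1-s)+(1-s)) ≤ u := Real.rpow_le_rpow_of_exponent_le hQ1 (by linarith)
    rw [Real.rpow_add hQ0, ← hxdef] at h1
    exact h1
  have ht4lo : x/2 < (Q-1)/2 * (Q-1)^(-s) := by
    have h1 : (Q-1) * (Q-1)^(-s) = (Q-1)^(1-s) := by
      rw [show (1-s) = 1 + -s by ring, Real.rpow_add (by linarith), Real.rpow_one]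
    have h2 : x < (Q-1)^(1-s) :=
      Real.rpow_lt_rpow_of_neg (by linarith) (by linarith) (by linarith)
    rw [← h1] at h2
    linarith
  have hy0 : (0:ℝ) < 1 + x/2 + x*x := by positivity
  have hL0 : 0 < (1-x)^(-(1/2) : ℝ) := Real.rpow_pos_of_pos hden0 _
  have hLsq : (1-x)^(-(1/2):ℝ) * (1-x)^(-(1/2):ℝ) = (1-x)⁻¹ := by
    rw [← Real.rpow_add hden0, show -(1/2:ℝ) + -(1/2) = -1 by norm_num, Real.rpow_neg_one]
  have hxx0 : 0 < x * x := mul_pos hx0 hx0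
  have hx33 : x*x*x ≤ 1/27 := by
    have a : x*x ≤ (1/3)*(1/3) := mul_le_mul hx3 hx3 hx0.le (by norm_num)
    have b : (x*x)*x ≤ ((1/3)*(1/3))*(1/3) :=
      mul_le_mul a hx3 hx0.le (by norm_num)
    linarith only [b]
  have hkey : (1-x)⁻¹ < (1 + x/2 + x*x) * (1 + x/2 + x*x) := by
    have hA : (x*x)*(2/3) ≤ (x*x)*(1-x) := mul_le_mul_of_nonneg_left hden hxx0.le
    have hB : (x*x)*(x*x*x) ≤ (x*x)*(1/27) := mul_le_mul_of_nonneg_left hx33 hxx0.le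
    have h1 : (1:ℝ) < (1 + x/2 + x*x) * (1 + x/2 + x*x) * (1-x) := by linarith only [hA, hB, hxx0]
    have h2 := mul_lt_mul_of_pos_right h1 (inv_pos.mpr hden0)
    rwa [one_mul, mul_assoc, mul_inv_cancel₀ hden0.ne', mul_one] at h2
  have hlow : (1-x)^(-(1/2):ℝ) < 1 + x/2 + x*x := by
    by_contra hc
    push_neg at hc
    have h2 : (1 + x/2 + x*x) * (1 + x/2 + x*x) ≤
        (1-x)^(-(1/2):ℝ) * (1-x)^(-(1/2):ℝ) :=
      mul_le_mul hc hc hy0.le (le_trans hy0.le hc)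
    rw [hLsq] at h2
    linarith only [h2, hkey]
  constructor
  · -- lower bound
    have ht2nn : 0 ≤ (Q-3)/2 * (Q+1)^(-s) := mul_nonneg (by linarith) hp2.le
    have htail0 : 0 ≤ (4*Q*((Q^2-1)/2)^(-s) + (Q^2-1)/2*(Q^2-Q)^(-s) +
        (Q-1)^2/2*(Q^2+Q)^(-s)) / (1-x) := div_nonneg hN0 hden0.le
    linarith only [hlow, ht4lo, hux2, ht2nn, hp3.le, hp5.le, htail0]
  · -- upper bound
    have ht2 : (Q-3)/2 * (Q+1)^(-s) ≤ x/2 := by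
      have h := mul_le_mul_of_nonneg_left hb2 (show (0:ℝ) ≤ (Q-3)/2 by linarith)
      rw [hxu]; linarith only [h, hu0.le]
    have ht4 : (Q-1)/2 * (Q-1)^(-s) ≤ 4 * x := by
      have h := mul_le_mul_of_nonneg_left hb4 (show (0:ℝ) ≤ (Q-1)/2 by linarith)
      rw [hxu]; linarith only [h, hu0.le]
    have hxu9 : x * u ≤ x * (1/9) := mul_le_mul_of_nonneg_left hu9 hx0.le
    have hxmul : x * u = Q * (u*u) := by rw [hxu]; ring
    have hxxmul : x * x = Q^2 * (u*u) := by rw [hxu]; ring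
    have hxx3 : x * x ≤ x * (1/3) := mul_le_mul_of_nonneg_left hx3 hx0.le
    have hT1 : 4*Q*((Q^2-1)/2)^(-s) ≤ 12 * x := by
      have h := mul_le_mul_of_nonneg_left hb6 (show (0:ℝ) ≤ 4*Q by linarith)
      linarith only [h, hxu9, hxmul, hx0.le]
    have hT2 : (Q^2-1)/2*(Q^2-Q)^(-s) ≤ 2 * x := by
      have h := mul_le_mul_of_nonneg_left hb7 (show (0:ℝ) ≤ (Q^2-1)/2 by linarith)
      linarith only [h, hxx3, hxxmul, huu0.le, hx0.le]
    have hT3 : (Q-1)^2/2*(Q^2+Q)^(-s) ≤ x/6 := by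
      have h := mul_le_mul_of_nonneg_left hb8 (show (0:ℝ) ≤ (Q-1)^2/2 by positivity)
      have h2 : (Q-1)^2 * (u*u) ≤ Q^2 * (u*u) :=
        mul_le_mul_of_nonneg_right (by linarith only [hQ1] : (Q-1)^2 ≤ Q^2) huu0.le
      linarith only [h, h2, hxx3, hxxmul]
    have hinv : (1-x)⁻¹ ≤ 3/2 := by
      have h := mul_le_mul_of_nonneg_right hden (inv_pos.mpr hden0).le
      rw [mul_inv_cancel₀ hden0.ne'] at h
      linarith only [h]
    have htail : (4*Q*((Q^2-1)/2)^(-s) + (Q^2-1)/2*(Q^2-Q)^(-s) +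
        (Q-1)^2/2*(Q^2+Q)^(-s)) / (1-x) ≤ 23 * x := by
      have hNle : 4*Q*((Q^2-1)/2)^(-s) + (Q^2-1)/2*(Q^2-Q)^(-s) + (Q-1)^2/2*(Q^2+Q)^(-s)
          ≤ 15 * x := by linarith only [hT1, hT2, hT3, hx0]
      rw [div_eq_mul_inv]
      calc (4*Q*((Q^2-1)/2)^(-s) + (Q^2-1)/2*(Q^2-Q)^(-s) + (Q-1)^2/2*(Q^2+Q)^(-s))
            * (1-x)⁻¹ ≤ (15*x) * (3/2) :=
            mul_le_mul hNle hinv (inv_pos.mpr hden0).le (by linarith)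
        _ ≤ 23 * x := by linarith only [hx0]
    have hrhs : 1 + 100 * x ≤ (1-x)^(-(100:ℝ)) := by
      have h3 : (1-x)^(-(100:ℝ)) = ((1-x)^(100:ℕ))⁻¹ := by
        rw [show -(100:ℝ) = -((100:ℕ):ℝ) by norm_num, Real.rpow_neg hden0.le,
          Real.rpow_natCast]
      rw [h3]
      set A : ℝ := (1+x)^(100:ℕ) with hAdef
      set B : ℝ := (1-x)^(100:ℕ) with hBdef
      have h1 : (1:ℝ) + 100*x ≤ A := by
        have h := one_add_mul_le_pow (show (-2:ℝ) ≤ x by linarith) 100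
        rw [← hAdef] at h
        push_cast at h
        linarith
      have h2 : A * B ≤ 1 := by
        rw [hAdef, hBdef, ← mul_pow]
        calc ((1+x)*(1-x))^(100:ℕ) ≤ 1^(100:ℕ) :=
              pow_le_pow_left₀ (mul_nonneg (by linarith only [hx0] : (0:ℝ) ≤ 1+x) hden0.le)
                (by linarith only [mul_pos hx0 hx0] : (1+x)*(1-x) ≤ 1) 100
          _ = 1 := one_pow _
      have hp : (0:ℝ) < B := by rw [hBdef]; exact pow_pos hden0 _
      have h4 : A ≤ B⁻¹ := by
        rw [← one_div, le_div_iff₀ hp]; exact h2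
      linarith only [h1, h4]
    linarith only [ht2, hb3, ht4, hb5, hT1, hT2, hT3, htail, hux, hrhs, hx0, hu0.le]
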